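/- Let d ≥ 2, ε ∈ (0,1) small enough, p₀ ∈ P₀, and C := 2/(min_{e∈V} p₀(e))². Suppose the i.i.d. environment law ℙ satisfies ℙ(Ω_{p₀,ε}) = 1 and λ := 𝔼[d(0,ω)·e₁] > Cε². Then Kalikow's criterion holds: for every g : V → [0,1] with Σ_{e∈V} g(e) > 0, one has 𝔼[ (d(0,ω)·e₁) / (Σ_{e∈V} ω(0,e) g(e)) ] ≥ (1/(2d)) (λ − Cε²) > 0; in particular the infimum over all such g of this expectation is strictly positive. -/

import Mathlib

open MeasureTheory Filter

namespace RWRE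

/-- A site of the lattice `ℤ^d`. -/
abbrev Site (d : ℕ) := Fin d → ℤ

/-- The set `V` of nearest-neighbor jumps: the `2d` signed unit vectors of `ℤ^d`,
i.e. the vectors of `ℓ¹`-norm one. -/
noncomputable def V (d : ℕ) : Finset (Site d) :=
  Finset.image (fun p : Fin d × Bool =>
    (fun j => if j = p.1 then (if p.2 then 1 else -1) else 0 : Site d)) Finset.univ

theorem V_nonempty {d : ℕ} (hd : 0 < d) : (V d).Nonempty :=
  ⟨_, Finset.mem_image.mpr ⟨(⟨0, hd⟩, true), Finset.mem_univ _, rfl⟩⟩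

/-- An environment: for each site `x` and jump `e`, a transition probability `ω x e`. -/
abbrev Env (d : ℕ) := Site d → Site d → ℝ

/-- `ω` is a genuine environment: at each site the jump probabilities form an element of `𝒫`. -/
def IsEnv {d : ℕ} (ω : Env d) : Prop :=
  ∀ x : Site d, (∀ e, 0 ≤ ω x e ∧ ω x e ≤ 1) ∧ (∑ e ∈ V d, ω x e = 1) ∧
    (∀ e ∉ V d, ω x e = 0)

/-- `p ∈ 𝒫`. -/
def IsProbVec {d : ℕ} (p : Site d → ℝ) : Prop :=
  (∀ e, 0 ≤ p e ∧ p e ≤ 1) ∧ (∑ e ∈ V d, p e = 1) ∧ (∀ e ∉ V d, p e = 0)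

/-- `p ∈ 𝒫₀`, i.e. `min_{e ∈ V} p e > 0`. -/
def IsPosProbVec {d : ℕ} (p : Site d → ℝ) : Prop :=
  IsProbVec p ∧ ∀ e ∈ V d, 0 < p e

/-- `ω ∈ Ω_{p₀,ε}`. -/
def InOmegaEps {d : ℕ} (p₀ : Site d → ℝ) (ε : ℝ) (ω : Env d) : Prop :=
  IsEnv ω ∧ ∀ x : Site d, ∀ e ∈ V d, |ω x e - p₀ e| ≤ ε

/-- The local drift `d(x,ω) = ∑_{e ∈ V} e ω(x,e) ∈ ℝ^d`. -/
noncomputable def drift {d : ℕ} (ω : Env d) (x : Site d) : Fin d → ℝ :=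
  fun i => ∑ e ∈ V d, ω x e * (e i : ℝ)

/-- The first standard basis vector `e₁` of `ℤ^d`. -/
def e1 (d : ℕ) : Site d := fun j => if (j : ℕ) = 0 then 1 else 0

/-- Inner product of a lattice vector with a lattice vector. -/
noncomputable def dotZ {d : ℕ} (x y : Site d) : ℝ := ∑ i, (x i : ℝ) * (y i : ℝ)

/-- Inner product of a real vector with a lattice vector. -/
noncomputable def dotR {d : ℕ} (v : Fin d → ℝ) (y : Site d) : ℝ := ∑ i, v i * (y i : ℝ)

/-- Under `ℙ` the coordinates `{ω x : x ∈ ℤ^d}` are i.i.d. -/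
def IsIID {d : ℕ} (ℙ : Measure (Env d)) : Prop :=
  ProbabilityTheory.iIndepFun
      (fun x (ω : Env d) => ω x) ℙ ∧
  ∀ x : Site d, ℙ.map (fun ω => ω x) = ℙ.map (fun ω => ω 0)

/-- `P` is the quenched law `P_{x₀,ω}` of the random walk in the environment `ω` started at
`x₀`: a probability measure on paths whose finite-dimensional cylinder probabilities are the
products of the transition probabilities of the walk. -/
def IsQuenched {d : ℕ} (ω : Env d) (x₀ : Site d) (P : Measure (ℕ → Site d)) : Prop :=
  IsProbabilityMeasure P ∧
  ∀ (n : ℕ) (y : ℕ → Site d),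
    P {X | ∀ k ≤ n, X k = y k} =
      (if y 0 = x₀ then 1 else 0) *
        ∏ k ∈ Finset.range n, ENNReal.ofReal (ω (y k) (y (k + 1) - y k))

/-- Ballisticity in the direction `e₁`: `P₀ = ℙ ⊗ P_{0,ω}`-a.s.,
`liminf Xₙ·e₁/n > 0`. -/
def BallisticE1 {d : ℕ} (ℙ : Measure (Env d)) (Pq : Env d → Measure (ℕ → Site d)) : Prop :=
  ∀ᵐ ω ∂ℙ, ∀ᵐ X ∂(Pq ω),
    0 < Filter.atTop.liminf (fun n : ℕ => dotZ (X n) (e1 d) / (n : ℝ))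

/-- The space shift `t_x`. -/
def shift {d : ℕ} (x : Site d) (ω : Env d) : Env d := fun y => ω (x + y)

/-- The transition kernel `R` of the environment seen from the particle:
`R f (ω) = ∑_{e ∈ V} ω(0,e) f(t_e ω)`. -/
noncomputable def Rker {d : ℕ} (f : Env d → ℝ) (ω : Env d) : ℝ :=
  ∑ e ∈ V d, ω 0 e * f (shift e ω)

/-- `Q` is an invariant probability measure for the environmental process. -/
def IsInvariantMeasure {d : ℕ} (Q : Measure (Env d)) : Prop :=
  IsProbabilityMeasure Q ∧
  ∀ f : Env d → ℝ, Measurable f → (∃ M, ∀ ω, |f ω| ≤ M) →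
    ∫ ω, Rker f ω ∂Q = ∫ ω, f ω ∂Q

/-- `Q` is the limiting invariant measure of the environmental process `ω̄_n = t_{X_n} ω`:
it is invariant for `R` and the annealed laws of `ω̄_n` converge weakly to it. -/
def IsLimitInvariantMeasure {d : ℕ} (ℙ : Measure (Env d))
    (Pq : Env d → Measure (ℕ → Site d)) (Q : Measure (Env d)) : Prop :=
  IsInvariantMeasure Q ∧
  ∀ f : Env d → ℝ, Continuous f → (∃ M, ∀ ω, |f ω| ≤ M) →
    Tendsto (fun n : ℕ => ∫ ω, ∫ X, f (shift (X n) ω) ∂(Pq ω) ∂ℙ) atTop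
      (nhds (∫ ω, f ω ∂Q))

/-- `n`-step transition probabilities of the homogeneous random walk with jump kernel `p`. -/
noncomputable def nstep {d : ℕ} (p : Site d → ℝ) : ℕ → Site d → Site d → ℝ
  | 0 => fun x y => if x = y then 1 else 0
  | n + 1 => fun x y => ∑ e ∈ V d, p e * nstep p n (x + e) y

/-- `J_p(x) = lim_{n→∞} ∑_{k=0}^n (p_k(0,-x) - p_k(0,0))`. -/
noncomputable def J {d : ℕ} (p : Site d → ℝ) (x : Site d) : ℝ :=
  limUnder Filter.atTop (fun n : ℕ =>
    ∑ k ∈ Finset.range (n + 1), (nstep p k 0 (-x) - nstep p k 0 0))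

/-- `ξ(x,e) = (ω(x,e) - p₀(e))/ε`. -/
noncomputable def xi {d : ℕ} (p₀ : Site d → ℝ) (ε : ℝ) (ω : Env d) (x e : Site d) : ℝ :=
  (ω x e - p₀ e) / ε

/-- `𝔼[ξ(0,e)]`. -/
noncomputable def xiMean {d : ℕ} (ℙ : Measure (Env d)) (p₀ : Site d → ℝ) (ε : ℝ)
    (e : Site d) : ℝ :=
  ∫ ω, xi p₀ ε ω 0 e ∂ℙ

/-- `ξ̄(x,e) = ξ(x,e) - 𝔼[ξ(0,e)]`. -/
noncomputable def xibar {d : ℕ} (ℙ : Measure (Env d)) (p₀ : Site d → ℝ) (ε : ℝ)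
    (ω : Env d) (x e : Site d) : ℝ :=
  xi p₀ ε ω x e - xiMean ℙ p₀ ε e

/-- `p_ε(e) = p₀(e) + ε 𝔼[ξ(0,e)]`. -/
noncomputable def pEps {d : ℕ} (ℙ : Measure (Env d)) (p₀ : Site d → ℝ) (ε : ℝ)
    (e : Site d) : ℝ :=
  p₀ e + ε * xiMean ℙ p₀ ε e

/-- `p*_ε(e) = p_ε(-e)`. -/
noncomputable def pEpsStar {d : ℕ} (ℙ : Measure (Env d)) (p₀ : Site d → ℝ) (ε : ℝ)
    (e : Site d) : ℝ :=
  pEps ℙ p₀ ε (-e)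

/-- Restriction (pushforward under the coordinate projection) of a measure on `Ω` to the
sites in `B`. -/
noncomputable def restrictTo {d : ℕ} (B : Finset (Site d)) (Q : Measure (Env d)) :
    Measure (↥B → Site d → ℝ) :=
  Q.map (fun ω (z : ↥B) => ω ↑z)


/-- The jump kernel of the simple symmetric random walk: `p₀(e) = 1/(2d)` for `e ∈ V`. -/
noncomputable def pSRW (d : ℕ) : Site d → ℝ :=
  fun e => if e ∈ V d then 1 / (2 * (d : ℝ)) else 0

/-- `g_δ^ω(0,x) = E'_{0,ω}[∑_{n=0}^{τ_δ} 1_x(X_n)]`, where `τ_δ` is a geometric random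
variable of parameter `1-δ` independent of walk and environment; by Fubini this equals
`∑_n δ^n P_{0,ω}(X_n = x)`. -/
noncomputable def gdelta {d : ℕ} (Pq : Env d → Measure (ℕ → Site d)) (δ : ℝ)
    (ω : Env d) (x : Site d) : ℝ :=
  ∑' n : ℕ, δ ^ n * ((Pq ω) {X | X n = x}).toReal

/-- Embedding of `ℤ^d` into `ℝ^d`. -/
noncomputable def toRvec {d : ℕ} (x : Site d) : Fin d → ℝ := fun i => (x i : ℝ)

/-- Euclidean inner product on `ℝ^d`. -/
noncomputable def dotRR {d : ℕ} (u v : Fin d → ℝ) : ℝ := ∑ i, u i * v i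

/-- Membership in the box `B_{l,L} = R((-L,L) × (-70L³,70L³)^{d-1}) ∩ ℤ^d`,
where `R` is the rotation with `R e₁ = l`. -/
def inBox {d : ℕ} (Rrot : (Fin d → ℝ) ≃ₗ[ℝ] (Fin d → ℝ)) (L : ℝ) (x : Site d) : Prop :=
  ∀ i : Fin d,
    if (i : ℕ) = 0 then |Rrot.symm (toRvec x) i| < L
    else |Rrot.symm (toRvec x) i| < 70 * L ^ 3

/-- The exit time `T_A` of the path `X` from a set `A` of sites. -/
noncomputable def exitTime {d : ℕ} (A : Set (Site d)) (X : ℕ → Site d) : ℕ :=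
  sInf {n | X n ∉ A}

/-- The annealed probability `P₀(A) = ∫ P_{0,ω}(A) dℙ(ω)` of a path event `A`. -/
noncomputable def annealedProb {d : ℕ} (ℙ : Measure (Env d))
    (Pq : Env d → Measure (ℕ → Site d)) (A : Set (ℕ → Site d)) : ℝ :=
  ∫ ω, ((Pq ω) A).toReal ∂ℙ


def vvec (d : ℕ) (p : Fin d × Bool) : Site d :=
  fun j => if j = p.1 then (if p.2 then 1 else -1) else 0

lemma vvec_injective (d : ℕ) : Function.Injective (vvec d) := by
  rintro ⟨j, b⟩ ⟨j', b'⟩ h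
  have hj := congrFun h j
  simp only [vvec, if_pos rfl] at hj
  by_cases hjj : j = j'
  · subst hjj
    simp only [if_pos rfl] at hj
    cases b <;> cases b' <;> simp_all
  · rw [if_neg hjj] at hj
    cases b <;> simp_all

lemma V_eq_image (d : ℕ) : V d = Finset.image (vvec d) Finset.univ := rfl

lemma sum_V {d : ℕ} {M : Type*} [AddCommMonoid M] (f : Site d → M) :
    ∑ e ∈ V d, f e = ∑ p : Fin d × Bool, f (vvec d p) := by
  rw [V_eq_image, Finset.sum_image (fun a _ b _ h => vvec_injective d h)]

lemma card_V (d : ℕ) : (V d).card = 2 * d := by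
  rw [V_eq_image, Finset.card_image_of_injective _ (vvec_injective d), Finset.card_univ]
  simp [Fintype.card_prod, Nat.mul_comm]

lemma e1_eq_vvec {d : ℕ} (hd : 0 < d) : e1 d = vvec d (⟨0, hd⟩, true) := by
  funext j
  simp only [e1, vvec, Fin.ext_iff]
  by_cases h : (j : ℕ) = 0 <;> simp [h]

lemma neg_e1_eq_vvec {d : ℕ} (hd : 0 < d) : -e1 d = vvec d (⟨0, hd⟩, false) := by
  funext j
  simp only [e1, vvec, Pi.neg_apply, Fin.ext_iff]
  by_cases h : (j : ℕ) = 0 <;> simp [h]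

lemma e1_mem_V {d : ℕ} (hd : 0 < d) : e1 d ∈ V d := by
  rw [V_eq_image, e1_eq_vvec hd]; exact Finset.mem_image_of_mem _ (Finset.mem_univ _)

lemma neg_e1_mem_V {d : ℕ} (hd : 0 < d) : -e1 d ∈ V d := by
  rw [V_eq_image, neg_e1_eq_vvec hd]; exact Finset.mem_image_of_mem _ (Finset.mem_univ _)

lemma e1_apply_zero {d : ℕ} (hd : 0 < d) : e1 d ⟨0, hd⟩ = 1 := by simp [e1]

lemma neg_e1_apply_zero {d : ℕ} (hd : 0 < d) : (-e1 d) ⟨0, hd⟩ = -1 := by simp [e1]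

lemma e1_ne_neg_e1 {d : ℕ} (hd : 0 < d) : e1 d ≠ -e1 d := by
  intro h
  have := congrFun h ⟨0, hd⟩
  rw [e1_apply_zero hd, neg_e1_apply_zero hd] at this
  omega

lemma coord_zero_of_mem_V {d : ℕ} (hd : 0 < d) {e : Site d} (he : e ∈ V d)
    (hne1 : e ≠ e1 d) (hne2 : e ≠ -e1 d) : e ⟨0, hd⟩ = 0 := by
  rw [V_eq_image, Finset.mem_image] at he
  obtain ⟨⟨j, b⟩, -, rfl⟩ := he
  by_cases hj : (⟨0, hd⟩ : Fin d) = j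
  · subst hj
    cases b
    · exact absurd (neg_e1_eq_vvec hd).symm hne2
    · exact absurd (e1_eq_vvec hd).symm hne1
  · simp [vvec, if_neg hj]

lemma sum_mul_coord0 {d : ℕ} (hd : 0 < d) (w : Site d → ℝ) :
    ∑ e ∈ V d, w e * ((e ⟨0, hd⟩ : ℤ) : ℝ) = w (e1 d) - w (-e1 d) := by
  classical
  have hsub : ({e1 d, -e1 d} : Finset (Site d)) ⊆ V d := by
    intro e he
    rcases Finset.mem_insert.mp he with h | h
    · exact h ▸ e1_mem_V hd
    · exact (Finset.mem_singleton.mp h) ▸ neg_e1_mem_V hd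
  rw [← Finset.sum_subset hsub (fun e he hne => by
    have h1 : e ≠ e1 d := fun h => hne (by simp [h])
    have h2 : e ≠ -e1 d := fun h => hne (by simp [h])
    rw [coord_zero_of_mem_V hd he h1 h2]; simp)]
  rw [Finset.sum_pair (e1_ne_neg_e1 hd)]
  rw [e1_apply_zero hd, neg_e1_apply_zero hd]
  push_cast
  ring

lemma integrable_of_ae_bound {α : Type*} [MeasurableSpace α] {μ : Measure α}
    [IsFiniteMeasure μ] {f : α → ℝ} (hf : AEStronglyMeasurable f μ) {M : ℝ}
    (h : ∀ᵐ ω ∂μ, |f ω| ≤ M) : Integrable f μ :=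
  Integrable.mono' (integrable_const M) hf (by simpa [Real.norm_eq_abs] using h)

/-- If `0 ≤ X ≤ β` and `0 ≤ Y ≤ δ` a.e., then `|E[XY] − E X E Y| ≤ δ E X`. -/
lemma cov_aux {α : Type*} [MeasurableSpace α] {μ : Measure α} [IsProbabilityMeasure μ]
    {X Y : α → ℝ} (hX : Measurable X) (hY : Measurable Y) {β δ : ℝ}
    (hXb : ∀ᵐ ω ∂μ, 0 ≤ X ω ∧ X ω ≤ β) (hYb : ∀ᵐ ω ∂μ, 0 ≤ Y ω ∧ Y ω ≤ δ) :
    |(∫ ω, X ω * Y ω ∂μ) - (∫ ω, X ω ∂μ) * (∫ ω, Y ω ∂μ)| ≤ δ * (∫ ω, X ω ∂μ) := by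
  have hβ : 0 ≤ β := by
    obtain ⟨ω, h1, h2⟩ := hXb.exists
    linarith
  have hδ : 0 ≤ δ := by
    obtain ⟨ω, h1, h2⟩ := hYb.exists
    linarith
  have hiX : Integrable X μ := integrable_of_ae_bound hX.aestronglyMeasurable
    (hXb.mono fun ω h => abs_le.mpr ⟨by linarith [h.1], h.2⟩)
  have hiY : Integrable Y μ := integrable_of_ae_bound hY.aestronglyMeasurable
    (hYb.mono fun ω h => abs_le.mpr ⟨by linarith [h.1], h.2⟩)
  have hiXY : Integrable (fun ω => X ω * Y ω) μ :=
    integrable_of_ae_bound (hX.mul hY).aestronglyMeasurable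
      ((hXb.and hYb).mono fun ω ⟨h1, h2⟩ => by
        rw [abs_mul]
        exact mul_le_mul (abs_le.mpr ⟨by linarith [h1.1], h1.2⟩)
          (abs_le.mpr ⟨by linarith [h2.1], h2.2⟩) (abs_nonneg _) hβ)
  have hmX0 : 0 ≤ ∫ ω, X ω ∂μ :=
    integral_nonneg_of_ae (hXb.mono fun ω h => h.1)
  have hmY0 : 0 ≤ ∫ ω, Y ω ∂μ :=
    integral_nonneg_of_ae (hYb.mono fun ω h => h.1)
  have hmYδ : (∫ ω, Y ω ∂μ) ≤ δ := by
    calc (∫ ω, Y ω ∂μ) ≤ ∫ _, δ ∂μ :=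
          integral_mono_ae hiY (integrable_const δ) (hYb.mono fun ω h => h.2)
      _ = δ := by simp
  have hXY0 : 0 ≤ ∫ ω, X ω * Y ω ∂μ :=
    integral_nonneg_of_ae ((hXb.and hYb).mono fun ω ⟨h1, h2⟩ => mul_nonneg h1.1 h2.1)
  have hXYle : (∫ ω, X ω * Y ω ∂μ) ≤ δ * (∫ ω, X ω ∂μ) := by
    calc (∫ ω, X ω * Y ω ∂μ) ≤ ∫ ω, X ω * δ ∂μ :=
          integral_mono_ae hiXY (hiX.mul_const δ)
            ((hXb.and hYb).mono fun ω ⟨h1, h2⟩ => mul_le_mul_of_nonneg_left h2.2 h1.1)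
      _ = δ * (∫ ω, X ω ∂μ) := by rw [integral_mul_const]; ring
  have hprod : (∫ ω, X ω ∂μ) * (∫ ω, Y ω ∂μ) ≤ δ * (∫ ω, X ω ∂μ) := by
    calc (∫ ω, X ω ∂μ) * (∫ ω, Y ω ∂μ) ≤ (∫ ω, X ω ∂μ) * δ :=
          mul_le_mul_of_nonneg_left hmYδ hmX0
      _ = δ * (∫ ω, X ω ∂μ) := by ring
  rw [abs_le]
  constructor <;> nlinarith [mul_nonneg hmX0 hmY0]

/-- Bhatia–Davis style covariance bound for a.e. interval-bounded variables. -/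
lemma cov_abs_le {α : Type*} [MeasurableSpace α] {μ : Measure α} [IsProbabilityMeasure μ]
    {X Y : α → ℝ} (hX : Measurable X) (hY : Measurable Y) {x₀ β y₀ δ : ℝ}
    (hXb : ∀ᵐ ω ∂μ, x₀ ≤ X ω ∧ X ω ≤ x₀ + β)
    (hYb : ∀ᵐ ω ∂μ, y₀ ≤ Y ω ∧ Y ω ≤ y₀ + δ) :
    |(∫ ω, X ω * Y ω ∂μ) - (∫ ω, X ω ∂μ) * (∫ ω, Y ω ∂μ)| ≤ δ * β / 2 := by
  have hβ : 0 ≤ β := by obtain ⟨ω, h1, h2⟩ := hXb.exists; linarith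
  have hδ : 0 ≤ δ := by obtain ⟨ω, h1, h2⟩ := hYb.exists; linarith
  have hiX : Integrable X μ := integrable_of_ae_bound hX.aestronglyMeasurable
    (M := |x₀| + β) (hXb.mono fun ω h => abs_le.mpr
      ⟨by cases abs_cases x₀ <;> linarith [h.1], by cases abs_cases x₀ <;> linarith [h.2]⟩)
  have hiY : Integrable Y μ := integrable_of_ae_bound hY.aestronglyMeasurable
    (M := |y₀| + δ) (hYb.mono fun ω h => abs_le.mpr
      ⟨by cases abs_cases y₀ <;> linarith [h.1], by cases abs_cases y₀ <;> linarith [h.2]⟩)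
  -- shifted variables
  set X₁ : α → ℝ := fun ω => X ω - x₀ with hX₁def
  set X₂ : α → ℝ := fun ω => x₀ + β - X ω with hX₂def
  set Y₁ : α → ℝ := fun ω => Y ω - y₀ with hY₁def
  have hiY₁ : Integrable Y₁ μ := hiY.sub (integrable_const y₀)
  have hmX₁ : (∫ ω, X₁ ω ∂μ) = (∫ ω, X ω ∂μ) - x₀ := by
    rw [hX₁def]; rw [integral_sub hiX (integrable_const x₀)]; simp
  have hmX₂ : (∫ ω, X₂ ω ∂μ) = x₀ + β - (∫ ω, X ω ∂μ) := by
    rw [hX₂def]; rw [integral_sub (integrable_const (x₀ + β)) hiX]; simp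
  have hmY₁ : (∫ ω, Y₁ ω ∂μ) = (∫ ω, Y ω ∂μ) - y₀ := by
    rw [hY₁def]; rw [integral_sub hiY (integrable_const y₀)]; simp
  have hXY₁ : ∀ᵐ ω ∂μ, 0 ≤ X₁ ω ∧ X₁ ω ≤ β :=
    hXb.mono fun ω h => ⟨by simp [hX₁def]; linarith [h.1], by simp [hX₁def]; linarith [h.2]⟩
  have hXY₂ : ∀ᵐ ω ∂μ, 0 ≤ X₂ ω ∧ X₂ ω ≤ β :=
    hXb.mono fun ω h => ⟨by simp [hX₂def]; linarith [h.2], by simp [hX₂def]; linarith [h.1]⟩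
  have hYb₁ : ∀ᵐ ω ∂μ, 0 ≤ Y₁ ω ∧ Y₁ ω ≤ δ :=
    hYb.mono fun ω h => ⟨by simp [hY₁def]; linarith [h.1], by simp [hY₁def]; linarith [h.2]⟩
  have h1 := cov_aux (X := X₁) (Y := Y₁) (hX.sub measurable_const) (hY.sub measurable_const) hXY₁ hYb₁
  have h2 := cov_aux (X := X₂) (Y := Y₁) (measurable_const.sub hX) (hY.sub measurable_const) hXY₂ hYb₁
  -- identify the covariances
  have hiXY : Integrable (fun ω => X ω * Y ω) μ :=
    integrable_of_ae_bound (hX.mul hY).aestronglyMeasurable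
      ((hXb.and hYb).mono fun ω ⟨ha, hb⟩ => by
        rw [abs_mul]
        have hax : |X ω| ≤ |x₀| + β := by cases abs_cases x₀ <;> cases abs_cases (X ω) <;> linarith [ha.1, ha.2]
        have hay : |Y ω| ≤ |y₀| + δ := by cases abs_cases y₀ <;> cases abs_cases (Y ω) <;> linarith [hb.1, hb.2]
        exact mul_le_mul hax hay (abs_nonneg _) (by positivity))
  have i1 : Integrable (fun ω => x₀ * Y ω) μ := hiY.const_mul x₀
  have i1' : Integrable (fun ω => (x₀ + β) * Y ω) μ := hiY.const_mul (x₀ + β)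
  have i2 : Integrable (fun ω => y₀ * X ω) μ := hiX.const_mul y₀
  have i3 : Integrable (fun ω => X ω * Y ω - x₀ * Y ω) μ := by exact hiXY.sub i1
  have i4 : Integrable (fun ω => X ω * Y ω - x₀ * Y ω - y₀ * X ω) μ := by exact i3.sub i2
  have i5 : Integrable (fun ω => (x₀ + β) * Y ω + y₀ * X ω) μ := by exact i1'.add i2
  have i6 : Integrable (fun ω => (x₀ + β) * Y ω + y₀ * X ω - X ω * Y ω) μ := by
    exact i5.sub hiXY
  have hexp1 : (∫ ω, X₁ ω * Y₁ ω ∂μ) =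
      (∫ ω, X ω * Y ω ∂μ) - x₀ * (∫ ω, Y ω ∂μ) - y₀ * (∫ ω, X ω ∂μ) + x₀ * y₀ := by
    have : (fun ω => X₁ ω * Y₁ ω)
        = fun ω => X ω * Y ω - x₀ * Y ω - y₀ * X ω + x₀ * y₀ := by
      funext ω; simp only [hX₁def, hY₁def]; ring
    rw [this, integral_add i4 (integrable_const _), integral_sub i3 i2,
      integral_sub hiXY i1, integral_const_mul, integral_const_mul]
    simp
  have hexp2 : (∫ ω, X₂ ω * Y₁ ω ∂μ) =
      -((∫ ω, X ω * Y ω ∂μ)) + (x₀ + β) * (∫ ω, Y ω ∂μ) + y₀ * (∫ ω, X ω ∂μ)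
        - (x₀ + β) * y₀ := by
    have : (fun ω => X₂ ω * Y₁ ω)
        = fun ω => (x₀ + β) * Y ω + y₀ * X ω - X ω * Y ω - (x₀ + β) * y₀ := by
      funext ω; simp only [hX₂def, hY₁def]; ring
    rw [this, integral_sub i6 (integrable_const _), integral_sub i5 hiXY,
      integral_add i1' i2, integral_const_mul, integral_const_mul]
    simp
    ring
  set C := (∫ ω, X ω * Y ω ∂μ) - (∫ ω, X ω ∂μ) * (∫ ω, Y ω ∂μ) with hC
  have hc1 : (∫ ω, X₁ ω * Y₁ ω ∂μ) - (∫ ω, X₁ ω ∂μ) * (∫ ω, Y₁ ω ∂μ) = C := by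
    rw [hexp1, hmX₁, hmY₁, hC]; ring
  have hc2 : (∫ ω, X₂ ω * Y₁ ω ∂μ) - (∫ ω, X₂ ω ∂μ) * (∫ ω, Y₁ ω ∂μ) = -C := by
    rw [hexp2, hmX₂, hmY₁, hC]; ring
  rw [hc1] at h1
  rw [hc2] at h2
  rw [abs_neg] at h2
  rw [hmX₁] at h1
  rw [hmX₂] at h2
  have := abs_nonneg C
  linarith

lemma pt3 {x t s a b c : ℝ} (hx : -a ≤ x) (ha : 0 ≤ a) (ht : t ^ 2 ≤ b)
    (hs : c ≤ s) (hc : 0 < c) : -(a * b / c) ≤ x * t ^ 2 / s := by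
  have hs0 : 0 < s := lt_of_lt_of_le hc hs
  have h1 : -(a * t ^ 2) ≤ x * t ^ 2 := by nlinarith [sq_nonneg t]
  have hb : 0 ≤ b := le_trans (sq_nonneg t) ht
  have h2 : a * t ^ 2 / s ≤ a * b / c :=
    div_le_div₀ (by positivity) (by nlinarith) hc hs
  have h1' : -(x * t ^ 2) ≤ a * t ^ 2 := by nlinarith [sq_nonneg t]
  have h3 : -(x * t ^ 2 / s) ≤ a * t ^ 2 / s := by
    rw [← neg_div]
    exact (div_le_div_iff_of_pos_right hs0).mpr h1'
  linarith

lemma key0 {κ ε : ℝ} (hκ : 0 < κ) (hκ4 : 4 * κ ≤ 1) (hε : 0 < ε) (hεκ : ε < κ / 8) :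
    κ ^ 2 * (4 * (κ - ε) + 16 * ε) ≤ 2 * (κ - ε) ^ 2 := by
  nlinarith [sq_nonneg (κ - ε), mul_pos hκ hκ, mul_nonneg hε.le hκ.le,
    mul_nonneg (mul_nonneg hκ.le hκ.le) (sub_nonneg.mpr hκ4),
    mul_nonneg (mul_nonneg hε.le hκ.le) (sub_nonneg.mpr hκ4)]

lemma final_arith {κ ε G Sb lam T2 I3 dd : ℝ}
    (hκ : 0 < κ) (hκ4 : 4 * κ ≤ 1) (hε : 0 < ε) (hεκ : ε < κ / 8)
    (hG : 0 < G) (hSbl : (κ - ε) * G ≤ Sb) (hSb1 : Sb ≤ 1) (hdd : 2 ≤ dd)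
    (hlam : 2 / κ ^ 2 * ε ^ 2 < lam)
    (hT2 : T2 ≤ 4 * ε ^ 2 * G)
    (hI3 : -(16 * ε ^ 3 * G / ((κ - ε) * Sb ^ 2)) ≤ I3) :
    lam / Sb - T2 / Sb ^ 2 + I3 ≥ 1 / (2 * dd) * (lam - 2 / κ ^ 2 * ε ^ 2) := by
  have hκε : 0 < κ - ε := by linarith
  have hSb : 0 < Sb := lt_of_lt_of_le (by positivity) hSbl
  have hκ2 : 0 < κ ^ 2 := by positivity
  have hkey := key0 hκ hκ4 hε hεκ
  set K : ℝ := 4 * ε ^ 2 * G + 16 * ε ^ 3 * G / (κ - ε) with hK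
  have keyG : K ≤ 2 / κ ^ 2 * ε ^ 2 * Sb := by
    have h1 : K ≤ 2 / κ ^ 2 * ε ^ 2 * ((κ - ε) * G) := by
      rw [hK, show (4:ℝ) * ε ^ 2 * G + 16 * ε ^ 3 * G / (κ - ε)
          = (4 * ε ^ 2 * G * (κ - ε) + 16 * ε ^ 3 * G) / (κ - ε) from by
        field_simp, div_le_iff₀ hκε]
      have h2 : 2 / κ ^ 2 * ε ^ 2 * ((κ - ε) * G) * (κ - ε)
          = 2 * (κ - ε) ^ 2 * ε ^ 2 * G / κ ^ 2 := by ring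
      rw [h2, le_div_iff₀ hκ2]
      nlinarith [mul_le_mul_of_nonneg_left hkey (by positivity : (0:ℝ) ≤ ε ^ 2 * G)]
    have h3 : 2 / κ ^ 2 * ε ^ 2 * ((κ - ε) * G) ≤ 2 / κ ^ 2 * ε ^ 2 * Sb :=
      mul_le_mul_of_nonneg_left hSbl (by positivity)
    linarith
  have hstep1 : T2 / Sb ^ 2 ≤ (4 * ε ^ 2 * G) / Sb ^ 2 :=
    (div_le_div_iff_of_pos_right (by positivity)).mpr hT2
  have hstep3 : lam / Sb - (4 * ε ^ 2 * G) / Sb ^ 2 - 16 * ε ^ 3 * G / ((κ - ε) * Sb ^ 2)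
      = (lam - K / Sb) / Sb := by
    rw [hK]; field_simp; ring
  have hstep4 : K / Sb ≤ 2 / κ ^ 2 * ε ^ 2 := by
    rw [div_le_iff₀ hSb]; linarith [keyG]
  have hstep5 : (lam - 2 / κ ^ 2 * ε ^ 2) / Sb ≤ (lam - K / Sb) / Sb :=
    (div_le_div_iff_of_pos_right hSb).mpr (by linarith)
  have hnum : 0 ≤ lam - 2 / κ ^ 2 * ε ^ 2 := by linarith
  have hstep6 : (lam - 2 / κ ^ 2 * ε ^ 2) / (2 * dd) ≤ (lam - 2 / κ ^ 2 * ε ^ 2) / Sb :=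
    div_le_div_of_nonneg_left hnum hSb (by linarith)
  have hfin : 1 / (2 * dd) * (lam - 2 / κ ^ 2 * ε ^ 2)
      = (lam - 2 / κ ^ 2 * ε ^ 2) / (2 * dd) := by ring
  rw [ge_iff_le, hfin]
  calc (lam - 2 / κ ^ 2 * ε ^ 2) / (2 * dd)
      ≤ (lam - K / Sb) / Sb := le_trans hstep6 hstep5
    _ = lam / Sb - (4 * ε ^ 2 * G) / Sb ^ 2 - 16 * ε ^ 3 * G / ((κ - ε) * Sb ^ 2) :=
        hstep3.symm
    _ ≤ lam / Sb - T2 / Sb ^ 2 + I3 := by linarith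

lemma dotR_e1 {d : ℕ} (hd : 0 < d) (w : Fin d → ℝ) : dotR w (e1 d) = w ⟨0, hd⟩ := by
  unfold dotR e1
  rw [Finset.sum_eq_single (⟨0, hd⟩ : Fin d)]
  · simp
  · intro i _ hne
    have hi : (i : ℕ) ≠ 0 := fun h => hne (Fin.ext h)
    simp [hi]
  · simp

lemma integral_le_const {α : Type*} [MeasurableSpace α] {μ : Measure α}
    [IsProbabilityMeasure μ] {f : α → ℝ} {c : ℝ} (hi : Integrable f μ)
    (h : ∀ᵐ ω ∂μ, f ω ≤ c) : ∫ ω, f ω ∂μ ≤ c := by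
  calc ∫ ω, f ω ∂μ ≤ ∫ _ω, c ∂μ := integral_mono_ae hi (integrable_const _) h
    _ = c := by simp

lemma const_le_integral {α : Type*} [MeasurableSpace α] {μ : Measure α}
    [IsProbabilityMeasure μ] {f : α → ℝ} {c : ℝ} (hi : Integrable f μ)
    (h : ∀ᵐ ω ∂μ, c ≤ f ω) : c ≤ ∫ ω, f ω ∂μ := by
  calc c = ∫ _ω, c ∂μ := by simp
    _ ≤ ∫ ω, f ω ∂μ := integral_mono_ae (integrable_const _) hi h

set_option maxHeartbeats 1000000 in
theorem kalikow_criterion_of_quadratic_local_drift' (d : ℕ) (hd : 2 ≤ d)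
    (p₀ : Site d → ℝ) (hp₀ : IsPosProbVec p₀) (hd0 : 0 < d) :
    ∃ ε₀ : ℝ, 0 < ε₀ ∧ ε₀ ≤ 1 ∧
      ∀ ε : ℝ, 0 < ε → ε < ε₀ →
      ∀ P : Measure (Env d),
        IsProbabilityMeasure P →
        IsIID P →
        P {ω | InOmegaEps p₀ ε ω} = 1 →
        (∫ ω, dotR (drift ω 0) (e1 d) ∂P) >
          (2 / ((V d).inf' (V_nonempty hd0) p₀) ^ 2) * ε ^ 2 →
        (∀ g : Site d → ℝ, (∀ e ∈ V d, 0 ≤ g e ∧ g e ≤ 1) →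
            0 < ∑ e ∈ V d, g e →
            (∫ ω, dotR (drift ω 0) (e1 d) / (∑ e ∈ V d, ω 0 e * g e) ∂P) ≥
              (1 / (2 * (d : ℝ))) *
                ((∫ ω, dotR (drift ω 0) (e1 d) ∂P) -
                  (2 / ((V d).inf' (V_nonempty hd0) p₀) ^ 2) * ε ^ 2)) ∧
        0 < (1 / (2 * (d : ℝ))) *
              ((∫ ω, dotR (drift ω 0) (e1 d) ∂P) -
                (2 / ((V d).inf' (V_nonempty hd0) p₀) ^ 2) * ε ^ 2) ∧
        0 < sInf {I : ℝ | ∃ g : Site d → ℝ, (∀ e ∈ V d, 0 ≤ g e ∧ g e ≤ 1) ∧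
              (0 < ∑ e ∈ V d, g e) ∧
              I = ∫ ω, dotR (drift ω 0) (e1 d) / (∑ e ∈ V d, ω 0 e * g e) ∂P} := by
  classical
  obtain ⟨⟨hp01, hpsum, hp0out⟩, hppos⟩ := hp₀
  set κ : ℝ := (V d).inf' (V_nonempty hd0) p₀ with hκdef
  have hκpos : 0 < κ := by
    rw [hκdef, Finset.lt_inf'_iff]
    exact fun e he => hppos e he
  have hκle : ∀ e ∈ V d, κ ≤ p₀ e := fun e he => Finset.inf'_le _ he
  have hd2 : (2 : ℝ) ≤ (d : ℝ) := by exact_mod_cast hd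
  have hκ4 : 4 * κ ≤ 1 := by
    have h := Finset.card_nsmul_le_sum (V d) p₀ κ hκle
    rw [card_V d, hpsum, nsmul_eq_mul] at h
    push_cast at h
    nlinarith
  refine ⟨κ / 8, by positivity, by linarith, ?_⟩
  intro ε hε hεκ P hprob hiid hP1 hLgt
  haveI := hprob
  have hκε : 0 < κ - ε := by linarith
  have hmeval : ∀ x e : Site d, Measurable (fun ω : Env d => ω x e) :=
    fun x e => (measurable_pi_apply e).comp (measurable_pi_apply x)
  -- master a.e. event
  set T : Set (Env d) :=
    (⋂ e ∈ (V d : Set (Site d)),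
        (fun ω : Env d => ω 0 e) ⁻¹' (Set.Icc (p₀ e - ε) (p₀ e + ε) ∩ Set.Icc 0 1)) ∩
      {ω : Env d | (∑ e ∈ V d, ω 0 e) = 1} with hTdef
  have hTmeas : MeasurableSet T := by
    rw [hTdef]
    refine MeasurableSet.inter ?_ ?_
    · exact MeasurableSet.biInter (V d).countable_toSet
        (fun e _ => (hmeval 0 e) (measurableSet_Icc.inter measurableSet_Icc))
    · exact (Finset.measurable_sum (V d) (fun e _ => hmeval 0 e))
        (measurableSet_singleton 1)
  have hTsub : {ω : Env d | InOmegaEps p₀ ε ω} ⊆ T := by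
    intro ω hω
    obtain ⟨hEnv, hclose⟩ := hω
    rw [hTdef]
    constructor
    · refine Set.mem_iInter₂.mpr fun e he => ?_
      have h1 := (hEnv 0).1 e
      have h2 := abs_le.mp (hclose 0 e he)
      exact ⟨⟨by linarith [h2.1], by linarith [h2.2]⟩, h1⟩
    · exact (hEnv 0).2.1
  have hT1 : P T = 1 := le_antisymm prob_le_one (hP1 ▸ measure_mono hTsub)
  have hae : ∀ᵐ ω ∂P, ω ∈ T := by
    have hcompl : P Tᶜ = 0 := by
      rw [measure_compl hTmeas (measure_ne_top _ _), hT1, measure_univ, tsub_self]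
    exact MeasureTheory.mem_ae_iff.mpr hcompl
  have hmaster : ∀ᵐ ω ∂P, (∀ e ∈ V d,
      (p₀ e - ε ≤ ω 0 e ∧ ω 0 e ≤ p₀ e + ε) ∧ 0 ≤ ω 0 e ∧ ω 0 e ≤ 1) ∧
      (∑ e ∈ V d, ω 0 e) = 1 := by
    filter_upwards [hae] with ω hω
    rw [hTdef] at hω
    obtain ⟨h1, h2⟩ := hω
    refine ⟨fun e he => ?_, h2⟩
    have h3 := Set.mem_iInter₂.mp h1 e he
    exact ⟨⟨h3.1.1, h3.1.2⟩, h3.2.1, h3.2.2⟩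
  -- the drift in direction e1 is a difference of two coordinates
  have hDfun : (fun ω : Env d => dotR (drift ω 0) (e1 d))
      = fun ω => ω 0 (e1 d) - ω 0 (-e1 d) := by
    funext ω
    rw [dotR_e1 hd0]
    exact sum_mul_coord0 hd0 (ω 0)
  have huV : e1 d ∈ V d := e1_mem_V hd0
  have hvV : -e1 d ∈ V d := neg_e1_mem_V hd0
  have hiEval : ∀ e ∈ V d, Integrable (fun ω : Env d => ω 0 e) P := by
    intro e he
    refine integrable_of_ae_bound (hmeval 0 e).aestronglyMeasurable (M := 1) ?_
    filter_upwards [hmaster] with ω hω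
    have h := (hω.1 e he).2
    rw [abs_le]
    exact ⟨by linarith [h.1], h.2⟩
  set q : Site d → ℝ := fun e => ∫ ω, ω 0 e ∂P with hq
  have hqb : ∀ e ∈ V d, (p₀ e - ε ≤ q e ∧ q e ≤ p₀ e + ε) ∧ 0 ≤ q e ∧ q e ≤ 1 := by
    intro e he
    have hi := hiEval e he
    simp only [hq]
    refine ⟨⟨const_le_integral hi ?_, integral_le_const hi ?_⟩,
      const_le_integral hi ?_, integral_le_const hi ?_⟩
    all_goals filter_upwards [hmaster] with ω hω
    · exact (hω.1 e he).1.1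
    · exact (hω.1 e he).1.2
    · exact (hω.1 e he).2.1
    · exact (hω.1 e he).2.2
  have hqsum : ∑ e ∈ V d, q e = 1 := by
    simp only [hq]
    rw [← integral_finset_sum (V d) hiEval]
    rw [integral_congr_ae (hmaster.mono fun ω hω => hω.2)]
    simp
  have hlam_eq : (∫ ω, dotR (drift ω 0) (e1 d) ∂P) = q (e1 d) - q (-e1 d) := by
    rw [hDfun, integral_sub (hiEval _ huV) (hiEval _ hvV)]
  have hL : 2 / κ ^ 2 * ε ^ 2 < (∫ ω, dotR (drift ω 0) (e1 d) ∂P) := hLgt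
  have hL' : 2 / κ ^ 2 * ε ^ 2 < q (e1 d) - q (-e1 d) := hlam_eq ▸ hL
  have hLpos : 0 < q (e1 d) - q (-e1 d) := by
    have : 0 < 2 / κ ^ 2 * ε ^ 2 := by positivity
    linarith
  have hΔ : -(2 * ε) ≤ p₀ (e1 d) - p₀ (-e1 d) := by
    have h1 := (hqb _ huV).1.2
    have h2 := (hqb _ hvV).1.1
    linarith
  -- main inequality for each g
  have main : ∀ g : Site d → ℝ, (∀ e ∈ V d, 0 ≤ g e ∧ g e ≤ 1) →
      0 < ∑ e ∈ V d, g e →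
      (∫ ω, dotR (drift ω 0) (e1 d) / (∑ e ∈ V d, ω 0 e * g e) ∂P) ≥
        (1 / (2 * (d : ℝ))) *
          ((∫ ω, dotR (drift ω 0) (e1 d) ∂P) - 2 / κ ^ 2 * ε ^ 2) := by
    intro g hg hGpos
    set G : ℝ := ∑ e ∈ V d, g e with hGdef
    set S0 : ℝ := ∑ e ∈ V d, p₀ e * g e with hS0def
    have hidlow : ∀ c : ℝ, ∑ e ∈ V d, (p₀ e + c) * g e = S0 + c * G := by
      intro c
      rw [hS0def, hGdef, Finset.mul_sum, ← Finset.sum_add_distrib]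
      exact Finset.sum_congr rfl fun e _ => by ring
    -- a.e. bounds on S
    have haeS : ∀ᵐ ω ∂P, (S0 - ε * G ≤ (∑ e ∈ V d, ω 0 e * g e) ∧
        (∑ e ∈ V d, ω 0 e * g e) ≤ S0 - ε * G + 2 * (ε * G)) ∧
        ((κ - ε) * G ≤ (∑ e ∈ V d, ω 0 e * g e) ∧ (∑ e ∈ V d, ω 0 e * g e) ≤ 1) := by
      filter_upwards [hmaster] with ω hω
      have hlow : ∑ e ∈ V d, (p₀ e + -ε) * g e ≤ ∑ e ∈ V d, ω 0 e * g e :=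
        Finset.sum_le_sum fun e he =>
          mul_le_mul_of_nonneg_right (by linarith [(hω.1 e he).1.1]) (hg e he).1
      have hhigh : ∑ e ∈ V d, ω 0 e * g e ≤ ∑ e ∈ V d, (p₀ e + ε) * g e :=
        Finset.sum_le_sum fun e he =>
          mul_le_mul_of_nonneg_right (hω.1 e he).1.2 (hg e he).1
      rw [hidlow] at hlow hhigh
      have hκlow : (κ - ε) * G ≤ ∑ e ∈ V d, ω 0 e * g e := by
        calc (κ - ε) * G = ∑ e ∈ V d, (κ - ε) * g e := by rw [hGdef, Finset.mul_sum]
          _ ≤ ∑ e ∈ V d, ω 0 e * g e := Finset.sum_le_sum fun e he =>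
              mul_le_mul_of_nonneg_right
                (by linarith [(hω.1 e he).1.1, hκle e he]) (hg e he).1
      have hone : ∑ e ∈ V d, ω 0 e * g e ≤ 1 := by
        calc ∑ e ∈ V d, ω 0 e * g e ≤ ∑ e ∈ V d, ω 0 e :=
              Finset.sum_le_sum fun e he =>
                mul_le_of_le_one_right (hω.1 e he).2.1 (hg e he).2
          _ = 1 := hω.2
      exact ⟨⟨by linarith, by linarith⟩, hκlow, hone⟩
    -- the averaged denominator
    set Sb : ℝ := ∑ e ∈ V d, q e * g e with hSbdef
    have hSb_in : (S0 - ε * G ≤ Sb ∧ Sb ≤ S0 + ε * G) ∧ ((κ - ε) * G ≤ Sb ∧ Sb ≤ 1) := by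
      have hlow : ∑ e ∈ V d, (p₀ e + -ε) * g e ≤ Sb :=
        Finset.sum_le_sum fun e he =>
          mul_le_mul_of_nonneg_right (by linarith [(hqb e he).1.1]) (hg e he).1
      have hhigh : Sb ≤ ∑ e ∈ V d, (p₀ e + ε) * g e :=
        Finset.sum_le_sum fun e he =>
          mul_le_mul_of_nonneg_right (hqb e he).1.2 (hg e he).1
      rw [hidlow] at hlow hhigh
      have hκlow : (κ - ε) * G ≤ Sb := by
        calc (κ - ε) * G = ∑ e ∈ V d, (κ - ε) * g e := by rw [hGdef, Finset.mul_sum]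
          _ ≤ Sb := Finset.sum_le_sum fun e he =>
              mul_le_mul_of_nonneg_right
                (by linarith [(hqb e he).1.1, hκle e he]) (hg e he).1
      have hone : Sb ≤ 1 := by
        calc Sb ≤ ∑ e ∈ V d, q e :=
              Finset.sum_le_sum fun e he =>
                mul_le_of_le_one_right (hqb e he).2.1 (hg e he).2
          _ = 1 := hqsum
      exact ⟨⟨by linarith, by linarith⟩, hκlow, hone⟩
    have hSbpos : 0 < Sb := lt_of_lt_of_le (mul_pos hκε hGpos) hSb_in.2.1
    -- measurability and integrability
    have hmS : Measurable (fun ω : Env d => ∑ e ∈ V d, ω 0 e * g e) :=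
      Finset.measurable_sum _ fun e _ => (hmeval 0 e).mul_const (g e)
    have hiS : Integrable (fun ω : Env d => ∑ e ∈ V d, ω 0 e * g e) P := by
      refine integrable_of_ae_bound hmS.aestronglyMeasurable (M := 1) ?_
      filter_upwards [haeS] with ω hω
      rw [abs_le]
      have := mul_pos hκε hGpos
      exact ⟨by linarith [hω.2.1], hω.2.2⟩
    have hSint : (∫ ω, (∑ e ∈ V d, ω 0 e * g e) ∂P) = Sb := by
      rw [integral_finset_sum (V d) (fun e he => (hiEval e he).mul_const (g e)), hSbdef]
      exact Finset.sum_congr rfl fun e he => by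
        simp only [hq]; exact integral_mul_const _ _
    have hiAB : Integrable (fun ω : Env d => ω 0 (e1 d) - ω 0 (-e1 d)) P := by
      exact (hiEval _ huV).sub (hiEval _ hvV)
    have hmAB : Measurable (fun ω : Env d => ω 0 (e1 d) - ω 0 (-e1 d)) :=
      (hmeval 0 (e1 d)).sub (hmeval 0 (-e1 d))
    have hiAS : Integrable (fun ω : Env d =>
        ω 0 (e1 d) * (∑ e ∈ V d, ω 0 e * g e)) P := by
      refine integrable_of_ae_bound ((hmeval 0 (e1 d)).mul hmS).aestronglyMeasurable
        (M := 1) ?_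
      filter_upwards [hmaster, haeS] with ω h1 h2
      have ha := (h1.1 _ huV).2
      have hb := h2.2
      have hc := mul_pos hκε hGpos
      have hS0' : 0 ≤ ∑ e ∈ V d, ω 0 e * g e := le_trans hc.le hb.1
      rw [abs_le]
      refine ⟨?_, mul_le_one₀ ha.2 hS0' hb.2⟩
      have := mul_nonneg ha.1 hS0'
      linarith
    have hiBS : Integrable (fun ω : Env d =>
        ω 0 (-e1 d) * (∑ e ∈ V d, ω 0 e * g e)) P := by
      refine integrable_of_ae_bound ((hmeval 0 (-e1 d)).mul hmS).aestronglyMeasurable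
        (M := 1) ?_
      filter_upwards [hmaster, haeS] with ω h1 h2
      have ha := (h1.1 _ hvV).2
      have hb := h2.2
      have hc := mul_pos hκε hGpos
      have hS0' : 0 ≤ ∑ e ∈ V d, ω 0 e * g e := le_trans hc.le hb.1
      rw [abs_le]
      refine ⟨?_, mul_le_one₀ ha.2 hS0' hb.2⟩
      have := mul_nonneg ha.1 hS0'
      linarith
    have hiABS : Integrable (fun ω : Env d =>
        (ω 0 (e1 d) - ω 0 (-e1 d)) * ((∑ e ∈ V d, ω 0 e * g e) - Sb)) P := by
      refine integrable_of_ae_bound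
        (hmAB.mul (hmS.sub measurable_const)).aestronglyMeasurable (M := 1) ?_
      filter_upwards [hmaster, haeS] with ω h1 h2
      have ha := (h1.1 _ huV).2
      have hb := (h1.1 _ hvV).2
      have hc := h2.2
      have hd' := mul_pos hκε hGpos
      have h3 := hSb_in.2
      rw [abs_mul]
      have e1b : |ω 0 (e1 d) - ω 0 (-e1 d)| ≤ 1 := by
        rw [abs_le]; constructor <;> linarith [ha.1, ha.2, hb.1, hb.2]
      have e2b : |(∑ e ∈ V d, ω 0 e * g e) - Sb| ≤ 1 := by
        rw [abs_le]; constructor <;> [linarith [hc.2, h3.2]; linarith [hc.1, h3.1]]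
      calc |ω 0 (e1 d) - ω 0 (-e1 d)| * |(∑ e ∈ V d, ω 0 e * g e) - Sb|
          ≤ 1 * 1 := mul_le_mul e1b e2b (abs_nonneg _) zero_le_one
        _ = 1 := by ring
    -- covariance identity and bounds
    have hqA : (∫ ω, ω 0 (e1 d) ∂P) = q (e1 d) := by simp only [hq]
    have hqB : (∫ ω, ω 0 (-e1 d) ∂P) = q (-e1 d) := by simp only [hq]
    have hT2eq : (∫ ω, (ω 0 (e1 d) - ω 0 (-e1 d)) *
          ((∑ e ∈ V d, ω 0 e * g e) - Sb) ∂P)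
        = ((∫ ω, ω 0 (e1 d) * (∑ e ∈ V d, ω 0 e * g e) ∂P) - q (e1 d) * Sb)
          - ((∫ ω, ω 0 (-e1 d) * (∑ e ∈ V d, ω 0 e * g e) ∂P) - q (-e1 d) * Sb) := by
      have hfun : (fun ω : Env d => (ω 0 (e1 d) - ω 0 (-e1 d)) *
            ((∑ e ∈ V d, ω 0 e * g e) - Sb))
          = fun ω => (ω 0 (e1 d) * (∑ e ∈ V d, ω 0 e * g e)
              - ω 0 (-e1 d) * (∑ e ∈ V d, ω 0 e * g e) - Sb * ω 0 (e1 d))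
            + Sb * ω 0 (-e1 d) := by
        funext ω; ring
      have i1 : Integrable (fun ω : Env d => Sb * ω 0 (e1 d)) P :=
        (hiEval _ huV).const_mul Sb
      have i2 : Integrable (fun ω : Env d => Sb * ω 0 (-e1 d)) P :=
        (hiEval _ hvV).const_mul Sb
      have i3 : Integrable (fun ω : Env d =>
          ω 0 (e1 d) * (∑ e ∈ V d, ω 0 e * g e)
            - ω 0 (-e1 d) * (∑ e ∈ V d, ω 0 e * g e)) P := by exact hiAS.sub hiBS
      have i4 : Integrable (fun ω : Env d =>
          ω 0 (e1 d) * (∑ e ∈ V d, ω 0 e * g e)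
            - ω 0 (-e1 d) * (∑ e ∈ V d, ω 0 e * g e) - Sb * ω 0 (e1 d)) P := by
        exact i3.sub i1
      rw [hfun, integral_add i4 i2, integral_sub i3 i1, integral_sub hiAS hiBS,
        integral_const_mul, integral_const_mul, hqA, hqB]
      ring
    have haeA : ∀ᵐ ω ∂P, p₀ (e1 d) - ε ≤ ω 0 (e1 d) ∧
        ω 0 (e1 d) ≤ p₀ (e1 d) - ε + 2 * ε := by
      filter_upwards [hmaster] with ω hω
      have h := (hω.1 _ huV).1
      exact ⟨h.1, by linarith [h.2]⟩
    have haeB : ∀ᵐ ω ∂P, p₀ (-e1 d) - ε ≤ ω 0 (-e1 d) ∧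
        ω 0 (-e1 d) ≤ p₀ (-e1 d) - ε + 2 * ε := by
      filter_upwards [hmaster] with ω hω
      have h := (hω.1 _ hvV).1
      exact ⟨h.1, by linarith [h.2]⟩
    have hcovA := cov_abs_le (hmeval 0 (e1 d)) hmS haeA (haeS.mono fun ω hω => hω.1)
    have hcovB := cov_abs_le (hmeval 0 (-e1 d)) hmS haeB (haeS.mono fun ω hω => hω.1)
    rw [hqA, hSint] at hcovA
    rw [hqB, hSint] at hcovB
    have hT2le : (∫ ω, (ω 0 (e1 d) - ω 0 (-e1 d)) *
        ((∑ e ∈ V d, ω 0 e * g e) - Sb) ∂P) ≤ 4 * ε ^ 2 * G := by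
      rw [hT2eq]
      calc ((∫ ω, ω 0 (e1 d) * (∑ e ∈ V d, ω 0 e * g e) ∂P) - q (e1 d) * Sb)
            - ((∫ ω, ω 0 (-e1 d) * (∑ e ∈ V d, ω 0 e * g e) ∂P) - q (-e1 d) * Sb)
          ≤ |((∫ ω, ω 0 (e1 d) * (∑ e ∈ V d, ω 0 e * g e) ∂P) - q (e1 d) * Sb)
            - ((∫ ω, ω 0 (-e1 d) * (∑ e ∈ V d, ω 0 e * g e) ∂P) - q (-e1 d) * Sb)| :=
            le_abs_self _
        _ ≤ |(∫ ω, ω 0 (e1 d) * (∑ e ∈ V d, ω 0 e * g e) ∂P) - q (e1 d) * Sb|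
            + |(∫ ω, ω 0 (-e1 d) * (∑ e ∈ V d, ω 0 e * g e) ∂P) - q (-e1 d) * Sb| :=
            abs_sub _ _
        _ ≤ 2 * (ε * G) * (2 * ε) / 2 + 2 * (ε * G) * (2 * ε) / 2 :=
            add_le_add hcovA hcovB
        _ = 4 * ε ^ 2 * G := by ring
    -- pointwise decomposition
    have hptid : ∀ᵐ ω ∂P, (ω 0 (e1 d) - ω 0 (-e1 d)) / (∑ e ∈ V d, ω 0 e * g e)
        = (ω 0 (e1 d) - ω 0 (-e1 d)) / Sb
          - (ω 0 (e1 d) - ω 0 (-e1 d)) * ((∑ e ∈ V d, ω 0 e * g e) - Sb) / Sb ^ 2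
          + (ω 0 (e1 d) - ω 0 (-e1 d)) * ((∑ e ∈ V d, ω 0 e * g e) - Sb) ^ 2
            / ((∑ e ∈ V d, ω 0 e * g e) * Sb ^ 2) := by
      filter_upwards [haeS] with ω hω
      have hSpos : 0 < ∑ e ∈ V d, ω 0 e * g e :=
        lt_of_lt_of_le (mul_pos hκε hGpos) hω.2.1
      field_simp
      ring
    have ig1 : Integrable (fun ω : Env d =>
        (ω 0 (e1 d) - ω 0 (-e1 d)) / Sb) P := hiAB.div_const Sb
    have ig2 : Integrable (fun ω : Env d =>
        (ω 0 (e1 d) - ω 0 (-e1 d)) * ((∑ e ∈ V d, ω 0 e * g e) - Sb) / Sb ^ 2) P :=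
      hiABS.div_const (Sb ^ 2)
    have ig3 : Integrable (fun ω : Env d =>
        (ω 0 (e1 d) - ω 0 (-e1 d)) * ((∑ e ∈ V d, ω 0 e * g e) - Sb) ^ 2
          / ((∑ e ∈ V d, ω 0 e * g e) * Sb ^ 2)) P := by
      refine integrable_of_ae_bound
        ((hmAB.mul ((hmS.sub measurable_const).pow_const 2)).div
          (hmS.mul_const (Sb ^ 2))).aestronglyMeasurable
        (M := 1 / (((κ - ε) * G) * Sb ^ 2)) ?_
      filter_upwards [hmaster, haeS] with ω h1 h2
      have ha := (h1.1 _ huV).2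
      have hb := (h1.1 _ hvV).2
      have hc := h2.2
      have h3 := hSb_in.2
      have hd' := mul_pos hκε hGpos
      have hden : 0 < (∑ e ∈ V d, ω 0 e * g e) * Sb ^ 2 :=
        mul_pos (lt_of_lt_of_le hd' hc.1) (pow_pos hSbpos 2)
      rw [abs_div, abs_of_pos hden]
      refine div_le_div₀ zero_le_one ?_ (mul_pos hd' (pow_pos hSbpos 2)) ?_
      · rw [abs_mul, abs_of_nonneg (sq_nonneg ((∑ e ∈ V d, ω 0 e * g e) - Sb))]
        have e1b : |ω 0 (e1 d) - ω 0 (-e1 d)| ≤ 1 := by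
          rw [abs_le]; constructor <;> linarith [ha.1, ha.2, hb.1, hb.2]
        have e2b : ((∑ e ∈ V d, ω 0 e * g e) - Sb) ^ 2 ≤ 1 := by
          have h01 : 0 ≤ ∑ e ∈ V d, ω 0 e * g e := le_trans hd'.le hc.1
          have habs : |(∑ e ∈ V d, ω 0 e * g e) - Sb| ≤ 1 :=
            abs_le.mpr ⟨by linarith [h3.2], by linarith [h3.1, hSbpos]⟩
          calc ((∑ e ∈ V d, ω 0 e * g e) - Sb) ^ 2
              = |(∑ e ∈ V d, ω 0 e * g e) - Sb| ^ 2 := (sq_abs _).symm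
            _ ≤ 1 ^ 2 := pow_le_pow_left₀ (abs_nonneg _) habs 2
            _ = 1 := one_pow 2
        exact mul_le_one₀ e1b (sq_nonneg _) e2b
      · exact mul_le_mul_of_nonneg_right hc.1 (sq_nonneg Sb)
    have iDS : Integrable (fun ω : Env d =>
        (ω 0 (e1 d) - ω 0 (-e1 d)) / (∑ e ∈ V d, ω 0 e * g e)) P := by
      refine integrable_of_ae_bound (hmAB.div hmS).aestronglyMeasurable
        (M := 1 / ((κ - ε) * G)) ?_
      filter_upwards [hmaster, haeS] with ω h1 h2
      have ha := (h1.1 _ huV).2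
      have hb := (h1.1 _ hvV).2
      have hd' := mul_pos hκε hGpos
      have hSpos : 0 < ∑ e ∈ V d, ω 0 e * g e := lt_of_lt_of_le hd' h2.2.1
      rw [abs_div, abs_of_pos hSpos]
      refine div_le_div₀ zero_le_one ?_ hd' h2.2.1
      rw [abs_le]; constructor <;> linarith [ha.1, ha.2, hb.1, hb.2]
    -- integral decomposition
    have hsplit : (∫ ω, (ω 0 (e1 d) - ω 0 (-e1 d)) / (∑ e ∈ V d, ω 0 e * g e) ∂P)
        = (q (e1 d) - q (-e1 d)) / Sb
          - (∫ ω, (ω 0 (e1 d) - ω 0 (-e1 d)) *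
              ((∑ e ∈ V d, ω 0 e * g e) - Sb) ∂P) / Sb ^ 2
          + ∫ ω, (ω 0 (e1 d) - ω 0 (-e1 d)) * ((∑ e ∈ V d, ω 0 e * g e) - Sb) ^ 2
              / ((∑ e ∈ V d, ω 0 e * g e) * Sb ^ 2) ∂P := by
      rw [integral_congr_ae hptid]
      have i12 : Integrable (fun ω : Env d =>
          (ω 0 (e1 d) - ω 0 (-e1 d)) / Sb
            - (ω 0 (e1 d) - ω 0 (-e1 d)) * ((∑ e ∈ V d, ω 0 e * g e) - Sb) / Sb ^ 2) P := by
        exact ig1.sub ig2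
      rw [integral_add i12 ig3, integral_sub ig1 ig2, integral_div, integral_div,
        integral_sub (hiEval _ huV) (hiEval _ hvV), hqA, hqB]
    -- lower bound on the third integral
    have hg3lb : -(16 * ε ^ 3 * G / ((κ - ε) * Sb ^ 2))
        ≤ ∫ ω, (ω 0 (e1 d) - ω 0 (-e1 d)) * ((∑ e ∈ V d, ω 0 e * g e) - Sb) ^ 2
            / ((∑ e ∈ V d, ω 0 e * g e) * Sb ^ 2) ∂P := by
      refine const_le_integral ig3 ?_
      filter_upwards [hmaster, haeS] with ω h1 h2
      have ha := (h1.1 _ huV).1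
      have hb := (h1.1 _ hvV).1
      have hbound : -(4 * ε) ≤ ω 0 (e1 d) - ω 0 (-e1 d) := by
        linarith [ha.1, hb.2, hΔ]
      have ht : ((∑ e ∈ V d, ω 0 e * g e) - Sb) ^ 2 ≤ (2 * (ε * G)) ^ 2 := by
        apply sq_le_sq'
        · linarith [h2.1.1, hSb_in.1.2]
        · linarith [h2.1.2, hSb_in.1.1]
      have hs : ((κ - ε) * G) * Sb ^ 2 ≤ (∑ e ∈ V d, ω 0 e * g e) * Sb ^ 2 :=
        mul_le_mul_of_nonneg_right h2.2.1 (sq_nonneg Sb)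
      have hc : 0 < ((κ - ε) * G) * Sb ^ 2 :=
        mul_pos (mul_pos hκε hGpos) (pow_pos hSbpos 2)
      have hpt := pt3 hbound (by positivity) ht hs hc
      have heq : 4 * ε * (2 * (ε * G)) ^ 2 / ((κ - ε) * G * Sb ^ 2)
          = 16 * ε ^ 3 * G / ((κ - ε) * Sb ^ 2) := by
        rw [div_eq_div_iff (by positivity) (by positivity)]
        ring
      rw [heq] at hpt
      exact hpt
    -- final assembly
    have hgoalfun : (fun ω : Env d =>
        dotR (drift ω 0) (e1 d) / (∑ e ∈ V d, ω 0 e * g e))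
        = fun ω => (ω 0 (e1 d) - ω 0 (-e1 d)) / (∑ e ∈ V d, ω 0 e * g e) := by
      funext ω
      rw [congrFun hDfun ω]
    rw [show (∫ ω, dotR (drift ω 0) (e1 d) / (∑ e ∈ V d, ω 0 e * g e) ∂P)
        = ∫ ω, (ω 0 (e1 d) - ω 0 (-e1 d)) / (∑ e ∈ V d, ω 0 e * g e) ∂P from by
      rw [hgoalfun]]
    rw [hsplit, hlam_eq]
    exact final_arith hκpos hκ4 hε hεκ hGpos hSb_in.2.1 hSb_in.2.2 hd2 hL' hT2le hg3lb
  -- conclude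
  have pos2 : 0 < (1 / (2 * (d : ℝ))) *
      ((∫ ω, dotR (drift ω 0) (e1 d) ∂P) - 2 / κ ^ 2 * ε ^ 2) := by
    have h1 : (0:ℝ) < 1 / (2 * (d : ℝ)) := by positivity
    have h2 : 0 < (∫ ω, dotR (drift ω 0) (e1 d) ∂P) - 2 / κ ^ 2 * ε ^ 2 := by linarith
    exact mul_pos h1 h2
  refine ⟨main, pos2, ?_⟩
  have hone : (∀ e ∈ V d, 0 ≤ (fun _ : Site d => (1:ℝ)) e ∧ (fun _ : Site d => (1:ℝ)) e ≤ 1) :=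
    fun e _ => ⟨zero_le_one, le_refl 1⟩
  have honesum : 0 < ∑ e ∈ V d, (fun _ : Site d => (1:ℝ)) e := by
    simp only [Finset.sum_const, card_V, nsmul_eq_mul, mul_one]
    exact_mod_cast (by omega : 0 < 2 * d)
  refine lt_of_lt_of_le pos2 (le_csInf ⟨_, ⟨fun _ => (1:ℝ), hone, honesum, rfl⟩⟩ ?_)
  rintro b ⟨g, hg1, hg2, rfl⟩
  exact main g hg1 hg2


/-- Kalikow's criterion under the quadratic local drift condition:
for `d ≥ 2`, `p₀ ∈ 𝒫₀`, `C = 2/(min_{e∈V} p₀(e))²`, `ε ∈ (0,1)` small enough, if the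
i.i.d. law `ℙ` satisfies `ℙ(Ω_{p₀,ε}) = 1` and `λ := 𝔼[d(0,ω)·e₁] > C ε²`, then for every
`g : V → [0,1]` with `∑ g(e) > 0`,
`𝔼[(d(0,ω)·e₁)/(∑_e ω(0,e)g(e))] ≥ (1/(2d))(λ - Cε²) > 0`; in particular the infimum
over such `g` is strictly positive. -/
theorem kalikow_criterion_of_quadratic_local_drift (d : ℕ) (hd : 2 ≤ d)
    (p₀ : Site d → ℝ) (hp₀ : IsPosProbVec p₀) :
    ∃ ε₀ : ℝ, 0 < ε₀ ∧ ε₀ ≤ 1 ∧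
      ∀ ε : ℝ, 0 < ε → ε < ε₀ →
      ∀ ℙ : Measure (Env d),
        IsProbabilityMeasure ℙ →
        IsIID ℙ →
        ℙ {ω | InOmegaEps p₀ ε ω} = 1 →
        (∫ ω, dotR (drift ω 0) (e1 d) ∂ℙ) >
          (2 / ((V d).inf' (V_nonempty (by omega)) p₀) ^ 2) * ε ^ 2 →
        (∀ g : Site d → ℝ, (∀ e ∈ V d, 0 ≤ g e ∧ g e ≤ 1) →
            0 < ∑ e ∈ V d, g e →
            (∫ ω, dotR (drift ω 0) (e1 d) / (∑ e ∈ V d, ω 0 e * g e) ∂ℙ) ≥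
              (1 / (2 * (d : ℝ))) *
                ((∫ ω, dotR (drift ω 0) (e1 d) ∂ℙ) -
                  (2 / ((V d).inf' (V_nonempty (by omega)) p₀) ^ 2) * ε ^ 2)) ∧
        0 < (1 / (2 * (d : ℝ))) *
              ((∫ ω, dotR (drift ω 0) (e1 d) ∂ℙ) -
                (2 / ((V d).inf' (V_nonempty (by omega)) p₀) ^ 2) * ε ^ 2) ∧
        0 < sInf {I : ℝ | ∃ g : Site d → ℝ, (∀ e ∈ V d, 0 ≤ g e ∧ g e ≤ 1) ∧
              (0 < ∑ e ∈ V d, g e) ∧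
              I = ∫ ω, dotR (drift ω 0) (e1 d) / (∑ e ∈ V d, ω 0 e * g e) ∂ℙ} := by
  exact kalikow_criterion_of_quadratic_local_drift' d hd p₀ hp₀ (by omega)

end RWRE
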